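/- Let G be a graph with no chorded 6-cycle and no subgraph isomorphic to K_4, containing the configuration C_4: a central vertex u_1 adjacent to four vertices u_2, u_3, u_4, u_5 forming a 4-cycle u_2 u_3 u_4 u_5 u_2 (so u_1 together with the 4-cycle forms a wheel on 5 vertices). If P is a path in G joining u_2 and u_4 that avoids u_1, u_3, u_5, then the length of P is not 1, 2, or 3. -/
import Mathlib

open SimpleGraph

def HasChorded6Cycle {V : Type*} (G : SimpleGraph V) : Prop :=
  ∃ a b c d e g : V, List.Nodup [a, b, c, d, e, g] ∧
    G.Adj a b ∧ G.Adj b c ∧ G.Adj c d ∧ G.Adj d e ∧ G.Adj e g ∧ G.Adj g a ∧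
    (G.Adj a c ∨ G.Adj b d ∨ G.Adj c e ∨ G.Adj d g ∨ G.Adj e a ∨ G.Adj g b ∨
     G.Adj a d ∨ G.Adj b e ∨ G.Adj c g)

/-- In a graph with no chorded 6-cycle and no `K₄` subgraph containing the wheel `W₅`
(hub `u1`, rim 4-cycle `u2 u3 u4 u5 u2`), any path from `u2` to `u4` avoiding
`u1, u3, u5` has length different from 1, 2 and 3. -/
theorem wheel_opposite_rim_path_length {V : Type*} (G : SimpleGraph V)
    (hc6 : ¬ HasChorded6Cycle G)
    (hK4 : ¬ ∃ a b c d : V, List.Nodup [a, b, c, d] ∧ G.Adj a b ∧ G.Adj a c ∧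
      G.Adj a d ∧ G.Adj b c ∧ G.Adj b d ∧ G.Adj c d)
    (u1 u2 u3 u4 u5 : V) (hnodup : List.Nodup [u1, u2, u3, u4, u5])
    (h12 : G.Adj u1 u2) (h13 : G.Adj u1 u3) (h14 : G.Adj u1 u4) (h15 : G.Adj u1 u5)
    (h23 : G.Adj u2 u3) (h34 : G.Adj u3 u4) (h45 : G.Adj u4 u5) (h52 : G.Adj u5 u2)
    (p : G.Walk u2 u4) (hp : p.IsPath)
    (h1 : u1 ∉ p.support) (h3 : u3 ∉ p.support) (h5 : u5 ∉ p.support) :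
    p.length ≠ 1 ∧ p.length ≠ 2 ∧ p.length ≠ 3 := by
  simp only [List.nodup_cons, List.mem_cons, List.not_mem_nil, or_false, List.nodup_nil,
    and_true, not_or, not_false_eq_true] at hnodup
  obtain ⟨⟨n12, n13, n14, n15⟩, ⟨n23, n24, n25⟩, ⟨n34, n35⟩, n45⟩ := hnodup
  refine ⟨?_, ?_, ?_⟩
  · intro hlen
    cases p with
    | nil => simp at hlen
    | cons h q =>
      cases q with
      | nil =>
        exact hK4 ⟨u1, u2, u3, u4, by simp [List.nodup_cons, n12, n13, n14, n23, n24, n34],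
          h12, h13, h14, h23, h, h34⟩
      | cons h' q' => simp [Walk.length_cons] at hlen
  · intro hlen
    cases p with
    | nil => simp at hlen
    | cons h q =>
      cases q with
      | nil => simp at hlen
      | cons h' q' =>
        cases q' with
        | nil =>
          rename_i x
          simp only [Walk.support_cons, Walk.support_nil, List.mem_cons,
            List.not_mem_nil, or_false, not_or] at h1 h3 h5
          have hnd := hp.support_nodup
          simp only [Walk.support_cons, Walk.support_nil, List.nodup_cons, List.mem_cons,
            List.not_mem_nil, or_false, not_or, List.nodup_nil, and_true] at hnd
          refine hc6 ⟨u2, x, u4, u5, u1, u3, ?_, h, h', h45, h15.symm, h13, h23.symm,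
            Or.inr (Or.inr (Or.inr (Or.inr (Or.inl h12))))⟩
          simp only [List.nodup_cons, List.mem_cons, List.not_mem_nil, or_false,
            List.nodup_nil, and_true, not_or, not_false_eq_true]
          refine ⟨⟨hnd.1.1, hnd.1.2, n25, (fun e => n12 e.symm), n23⟩,
            ⟨hnd.2.1, fun e => h5.2.1 e.symm, fun e => h1.2.1 e.symm, fun e => h3.2.1 e.symm⟩,
            ⟨n45, (fun e => n14 e.symm), (fun e => n34 e.symm)⟩,
            ⟨n15 ∘ Eq.symm, n35 ∘ Eq.symm⟩, n13⟩
        | cons h'' q'' => simp [Walk.length_cons] at hlen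
  · intro hlen
    cases p with
    | nil => simp at hlen
    | cons h q =>
      cases q with
      | nil => simp at hlen
      | cons h' q' =>
        cases q' with
        | nil => simp at hlen
        | cons h'' q'' =>
          cases q'' with
          | nil =>
            rename_i x y
            simp only [Walk.support_cons, Walk.support_nil, List.mem_cons,
              List.not_mem_nil, or_false, not_or] at h1 h3 h5
            have hnd := hp.support_nodup
            simp only [Walk.support_cons, Walk.support_nil, List.nodup_cons, List.mem_cons,
              List.not_mem_nil, or_false, not_or, List.nodup_nil, and_true] at hnd
            refine hc6 ⟨u2, x, y, u4, u5, u1, ?_, h, h', h'', h45, h15.symm, h12,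
              Or.inr (Or.inr (Or.inr (Or.inl h14.symm)))⟩
            simp only [List.nodup_cons, List.mem_cons, List.not_mem_nil, or_false,
              List.nodup_nil, and_true, not_or, not_false_eq_true]
            refine ⟨⟨hnd.1.1, hnd.1.2.1, hnd.1.2.2, n25, (fun e => n12 e.symm)⟩,
              ⟨hnd.2.1.1, hnd.2.1.2, fun e => h5.2.1 e.symm, fun e => h1.2.1 e.symm⟩,
              ⟨hnd.2.2.1, fun e => h5.2.2.1 e.symm, fun e => h1.2.2.1 e.symm⟩,
              ⟨n45, (fun e => n14 e.symm)⟩, n15 ∘ Eq.symm⟩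
          | cons _ _ => simp [Walk.length_cons] at hlen
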